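/- For every sequence (k_r)_{r≥1} of real numbers there exists a weighted graph on X=ℕ₀ with b(x,y)>0 if and only if |x−y|=1 and a measure m : ℕ₀→(0,∞) such that, writing d_+(r)=b(r,r+1)/m(r) and d_-(r)=b(r−1,r)/m(r) for r≥1 with d_-(0)=0: (a) d_+(r)=1 for all r≥0 and ∑_{r=1}^∞ 1/d_-(r) < ∞ (so that ∑_r (D(r)−d_-(r)+1)/d_-(r) < ∞ and hence the graph does not satisfy the Feller property); (b) the curvature κ(r) := (d_+(r−1)−d_-(r−1)) − (d_+(r)−d_-(r)) satisfies κ(r) ≥ k_r for all r≥1; and (c) the Bakry–Émery curvature bound holds at every r≥1, i.e. Γ₂(f,f)(r) ≥ k_r·Γ₁(f,f)(r) for every f : ℕ₀→ℝ. -/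

import Mathlib

/-- The formal graph Laplacian `𝓛f(x) = (1/m x) ∑_y b x y (f x − f y)`. -/
noncomputable def lap {V : Type*} (b : V → V → ℝ) (m : V → ℝ) (f : V → ℝ) (x : V) : ℝ :=
  (1 / m x) * ∑' y, b x y * (f x - f y)

/-- On the path graph `ℕ₀`: `d_+(r) = b(r,r+1)/m(r)`. -/
noncomputable def dplus (b : ℕ → ℕ → ℝ) (m : ℕ → ℝ) (r : ℕ) : ℝ :=
  b r (r + 1) / m r

/-- On the path graph `ℕ₀`: `d_-(r) = b(r−1,r)/m(r)` for `r ≥ 1`, with `d_-(0) = 0`. -/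
noncomputable def dminus (b : ℕ → ℕ → ℝ) (m : ℕ → ℝ) (r : ℕ) : ℝ :=
  if r = 0 then 0 else b (r - 1) r / m r

/-- The Ollivier-Ricci curvature of the edge `{r−1, r}`:
`κ(r) = (d_+(r−1) − d_-(r−1)) − (d_+(r) − d_-(r))`. -/
noncomputable def kappa (b : ℕ → ℕ → ℝ) (m : ℕ → ℝ) (r : ℕ) : ℝ :=
  (dplus b m (r - 1) - dminus b m (r - 1)) - (dplus b m r - dminus b m r)

/-- The iterated carré du champ operators: `Γ₀(f,g) = f·g` and
`Γ_k(f,g) = −𝓛Γ_{k−1}(f,g) + Γ_{k−1}(𝓛f,g) + Γ_{k−1}(f,𝓛g)` for `k ≥ 1`. -/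
noncomputable def Gam (b : ℕ → ℕ → ℝ) (m : ℕ → ℝ) :
    ℕ → (ℕ → ℝ) → (ℕ → ℝ) → (ℕ → ℝ)
  | 0, f, g => fun x => f x * g x
  | (k + 1), f, g => fun x =>
      -(lap b m (Gam b m k f g) x) + Gam b m k (lap b m f) g x +
        Gam b m k f (lap b m g) x

section Aux

variable (k : ℕ → ℝ)

noncomputable def cseq (k : ℕ → ℝ) : ℕ → ℝ
  | 0 => 0
  | (n+1) => 2 * cseq k n + |k (n+1)| + 6

lemma cseq_nonneg (n : ℕ) : 0 ≤ cseq k n := by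
  induction n with
  | zero => simp [cseq]
  | succ n ih =>
      have := abs_nonneg (k (n+1))
      simp only [cseq]; linarith

lemma cseq_pos (n : ℕ) : 0 < cseq k (n+1) := by
  have := cseq_nonneg k n
  have := abs_nonneg (k (n+1))
  simp only [cseq]; linarith

lemma cseq_lb (n : ℕ) : 6 * 2 ^ n ≤ cseq k (n+1) := by
  induction n with
  | zero =>
      have := abs_nonneg (k 1)
      simp only [cseq, pow_zero]; linarith
  | succ n ih =>
      have := abs_nonneg (k (n+2))
      have h0 := cseq_nonneg k (n+1)
      calc (6:ℝ) * 2 ^ (n+1) = 2 * (6 * 2 ^ n) := by ring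
      _ ≤ 2 * cseq k (n+1) := by linarith
      _ ≤ cseq k (n+2) := by simp only [cseq]; linarith

noncomputable def mseq (k : ℕ → ℝ) : ℕ → ℝ
  | 0 => 1
  | (n+1) => mseq k n / cseq k (n+1)

lemma mseq_pos (n : ℕ) : 0 < mseq k n := by
  induction n with
  | zero => simp [mseq]
  | succ n ih =>
      have := cseq_pos k n
      simp only [mseq]; positivity

lemma mseq_succ (n : ℕ) : mseq k n = cseq k (n+1) * mseq k (n+1) := by
  have := (cseq_pos k n).ne'
  rw [show mseq k (n+1) = mseq k n / cseq k (n+1) from rfl]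
  field_simp

noncomputable def bb (k : ℕ → ℝ) : ℕ → ℕ → ℝ := fun x y =>
  if y = x + 1 then mseq k x else if x = y + 1 then mseq k y else 0

lemma bb_apply_zero (y : ℕ) (hy : y ≠ 1) : bb k 0 y = 0 := by
  have h2 : (0:ℕ) ≠ y + 1 := by omega
  simp [bb, hy, h2]

lemma lap_zero (f : ℕ → ℝ) : lap (bb k) (mseq k) f 0 = f 0 - f 1 := by
  unfold lap
  rw [tsum_eq_sum (s := {1}) (by
    intro y hy
    simp only [Finset.mem_singleton] at hy
    rw [bb_apply_zero k y hy]; ring)]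
  have h1 : bb k 0 1 = mseq k 0 := by simp [bb]
  have := (mseq_pos k 0).ne'
  rw [Finset.sum_singleton, h1]
  field_simp

lemma lap_succ (f : ℕ → ℝ) (n : ℕ) :
    lap (bb k) (mseq k) f (n+1) =
      (f (n+1) - f (n+2)) + cseq k (n+1) * (f (n+1) - f n) := by
  unfold lap
  rw [tsum_eq_sum (s := {n, n+2}) (by
    intro y hy
    simp only [Finset.mem_insert, Finset.mem_singleton] at hy
    push_neg at hy
    have h1 : y ≠ n + 1 + 1 := by omega
    have h2 : n + 1 ≠ y + 1 := by omega
    simp [bb, h1, h2, hy.1.symm])]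
  have hne : (n : ℕ) ≠ n + 2 := by omega
  rw [Finset.sum_pair hne]
  have h1 : bb k (n+1) n = mseq k n := by
    simp [bb]; omega
  have h2 : bb k (n+1) (n+2) = mseq k (n+1) := by simp [bb]
  have hm := (mseq_pos k (n+1)).ne'
  rw [h1, h2, mseq_succ k n]
  field_simp
  ring

lemma lap_eq (f : ℕ → ℝ) (r : ℕ) :
    lap (bb k) (mseq k) f r =
      (f r - f (r+1)) + cseq k r * (f r - f (r-1)) := by
  cases r with
  | zero => simp [lap_zero, cseq]
  | succ n => simpa using lap_succ k f n

lemma gam1_eq (f g : ℕ → ℝ) (r : ℕ) :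
    Gam (bb k) (mseq k) 1 f g r =
      (f r - f (r+1)) * (g r - g (r+1)) +
        cseq k r * ((f r - f (r-1)) * (g r - g (r-1))) := by
  show -(lap (bb k) (mseq k) (fun x => f x * g x) r) + lap (bb k) (mseq k) f r * g r
      + f r * lap (bb k) (mseq k) g r = _
  rw [lap_eq, lap_eq, lap_eq]
  ring

lemma quad (C1 C2 C3 K p q s t u : ℝ) (h0 : 0 ≤ C1) (h2 : 0 < C2)
    (hB : C1 + K + 6 ≤ C2) (hK : K ≤ C2) (h3 : 2*C2 ≤ C3) :
    0 ≤
      (-( ((s - t) * (s - t) + C2 * ((s - q) * (s - q))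
          - ((t - u) * (t - u) + C3 * ((t - s) * (t - s))))
        + C2 * ((s - t) * (s - t) + C2 * ((s - q) * (s - q))
          - ((q - s) * (q - s) + C1 * ((q - p) * (q - p)))) )
      + 2 * ( (s - t) * (((s - t) + C2 * (s - q)) - ((t - u) + C3 * (t - s)))
          + C2 * ((s - q) * (((s - t) + C2 * (s - q)) - ((q - s) + C1 * (q - p)))) ))
      - K * ((s - t) * (s - t) + C2 * ((s - q) * (s - q))) := by
  have hA4 : 4*C2 ≤ 3*C3 - C2 - K := by linarith
  have hApos : 0 < 3*C3 - C2 - K := by linarith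
  have hB8 : (8:ℝ) ≤ 2 - K + C2 - C1 := by linarith
  have hAB : 32*C2 ≤ (3*C3 - C2 - K)*(2 - K + C2 - C1) := by
    calc (32:ℝ)*C2 = (4*C2)*8 := by ring
    _ ≤ (3*C3 - C2 - K)*(2 - K + C2 - C1) :=
      mul_le_mul hA4 hB8 (by norm_num) (le_of_lt hApos)
  have t1 : 0 ≤ (3*C3 - C2 - K)*((u - 2*t + s)*(u - 2*t + s)) :=
    mul_nonneg hApos.le (mul_self_nonneg _)
  have t2 : 0 ≤ (3*C3 - C2 - K)*C1*C2*((p - 2*q + s)*(p - 2*q + s)) :=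
    mul_nonneg (mul_nonneg (mul_nonneg hApos.le h0) h2.le) (mul_self_nonneg _)
  have t3 : 0 ≤ ((3*C3 - C2 - K)*(t-s)+2*C2*(q-s))*((3*C3 - C2 - K)*(t-s)+2*C2*(q-s)) :=
    mul_self_nonneg _
  have t4 : 0 ≤ C2*((3*C3 - C2 - K)*(2 - K + C2 - C1) - 4*C2)*((q-s)*(q-s)) :=
    mul_nonneg (mul_nonneg h2.le (by linarith)) (mul_self_nonneg _)
  nlinarith [t1, t2, t3, t4, hApos]

end Aux

/-- For every sequence `(k_r)` of reals there is a weighted graph on `ℕ₀` (a weighted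
half-line) with `d_+ ≡ 1` and `∑ 1/d_-(r) < ∞` (hence not Feller) whose Ollivier-Ricci
curvature satisfies `κ(r) ≥ k_r` and whose Bakry–Émery curvature satisfies
`Γ₂(f,f)(r) ≥ k_r·Γ₁(f,f)(r)` for all `f` and all `r ≥ 1`. -/
theorem stmt4 (k : ℕ → ℝ) :
    ∃ (b : ℕ → ℕ → ℝ) (m : ℕ → ℝ),
      (∀ x y, 0 ≤ b x y) ∧ (∀ x y, b x y = b y x) ∧
      (∀ x y, 0 < b x y ↔ (y = x + 1 ∨ x = y + 1)) ∧
      (∀ x, 0 < m x) ∧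
      (∀ r : ℕ, dplus b m r = 1) ∧
      Summable (fun r : ℕ => 1 / dminus b m (r + 1)) ∧
      (∀ r : ℕ, 1 ≤ r → k r ≤ kappa b m r) ∧
      (∀ (f : ℕ → ℝ) (r : ℕ), 1 ≤ r →
        k r * Gam b m 1 f f r ≤ Gam b m 2 f f r) := by
  refine ⟨bb k, mseq k, ?_, ?_, ?_, mseq_pos k, ?_, ?_, ?_, ?_⟩
  · intro x y
    unfold bb
    split_ifs with h1 h2
    · exact (mseq_pos k x).le
    · exact (mseq_pos k y).le
    · exact le_refl 0
  · intro x y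
    unfold bb
    split_ifs with h1 h2 h3 h4 h5 <;> try rfl
    all_goals omega
  · intro x y
    unfold bb
    split_ifs with h1 h2
    · simp [h1, mseq_pos k x]
    · simp [h1, h2, mseq_pos k y]
    · simp [h1, h2]
  · intro r
    have h1 : bb k r (r+1) = mseq k r := by simp [bb]
    rw [dplus, h1, div_self (mseq_pos k r).ne']
  · have hdm : ∀ r : ℕ, dminus (bb k) (mseq k) (r+1) = cseq k (r+1) := by
      intro r
      have h1 : bb k r (r+1) = mseq k r := by simp [bb]
      rw [dminus]
      simp only [Nat.succ_ne_zero, if_false, Nat.add_sub_cancel]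
      rw [h1, mseq_succ k r]
      rw [mul_div_assoc, div_self (mseq_pos k (r+1)).ne', mul_one]
    have hsum : Summable (fun r : ℕ => (1/6 : ℝ) * (1/2)^r) :=
      (summable_geometric_of_lt_one (by norm_num) (by norm_num)).mul_left _
    apply Summable.of_nonneg_of_le _ _ hsum
    · intro r
      rw [hdm r]
      have := cseq_pos k r
      positivity
    · intro r
      rw [hdm r]
      have hlb := cseq_lb k r
      have h6 : (0:ℝ) < 6 * 2 ^ r := by positivity
      calc 1 / cseq k (r+1) ≤ 1 / (6 * 2 ^ r) :=
        one_div_le_one_div_of_le h6 hlb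
      _ = (1/6) * (1/2)^r := by
        rw [one_div, one_div, one_div, mul_inv, inv_pow]
  · intro r hr
    obtain ⟨n, rfl⟩ : ∃ n, r = n + 1 := ⟨r - 1, by omega⟩
    have hdm : ∀ s : ℕ, dminus (bb k) (mseq k) s = cseq k s := by
      intro s
      cases s with
      | zero => simp [dminus, cseq]
      | succ j =>
          have h1 : bb k j (j+1) = mseq k j := by simp [bb]
          rw [dminus]
          simp only [Nat.succ_ne_zero, if_false, Nat.add_sub_cancel]
          rw [h1, mseq_succ k j]
          rw [mul_div_assoc, div_self (mseq_pos k (j+1)).ne', mul_one]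
    have hdp : ∀ s : ℕ, dplus (bb k) (mseq k) s = 1 := by
      intro s
      have h1 : bb k s (s+1) = mseq k s := by simp [bb]
      rw [dplus, h1, div_self (mseq_pos k s).ne']
    rw [kappa, hdp, hdp, hdm, hdm]
    simp only [Nat.add_sub_cancel]
    have h1 : cseq k (n+1) = 2 * cseq k n + |k (n+1)| + 6 := rfl
    have h2 := le_abs_self (k (n+1))
    have h3 := cseq_nonneg k n
    linarith
  · intro f r hr
    obtain ⟨n, rfl⟩ : ∃ n, r = n + 1 := ⟨r - 1, by omega⟩
    have e2 : Gam (bb k) (mseq k) 2 f f (n+1) =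
        -(lap (bb k) (mseq k) (Gam (bb k) (mseq k) 1 f f) (n+1))
        + Gam (bb k) (mseq k) 1 (lap (bb k) (mseq k) f) f (n+1)
        + Gam (bb k) (mseq k) 1 f (lap (bb k) (mseq k) f) (n+1) := rfl
    rw [e2]
    simp only [lap_eq k, gam1_eq k, Nat.add_sub_cancel]
    have key := quad (cseq k n) (cseq k (n+1)) (cseq k (n+1+1)) (k (n+1))
      (f (n-1)) (f n) (f (n+1)) (f (n+1+1)) (f (n+1+1+1))
      (cseq_nonneg k n) (cseq_pos k n)
      (by
        have h1 : cseq k (n+1) = 2 * cseq k n + |k (n+1)| + 6 := rfl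
        have h2 := le_abs_self (k (n+1))
        have h3 := cseq_nonneg k n
        linarith)
      (by
        have h1 : cseq k (n+1) = 2 * cseq k n + |k (n+1)| + 6 := rfl
        have h2 := le_abs_self (k (n+1))
        have h3 := cseq_nonneg k n
        linarith)
      (by
        have h1 : cseq k (n+1+1) = 2 * cseq k (n+1) + |k (n+1+1)| + 6 := rfl
        have h2 := abs_nonneg (k (n+1+1))
        linarith)
    nlinarith [key]
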